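/- There exist constants ε₀ ∈ (0, 1) and C ≥ 0, depending only on q and the chosen norm, with the following property: for every continuous A : [0, 1] → M_q(ℂ) with sup_{t ∈ [0,1]} ‖A(t)‖ < ε₀, the solution a : [0,1] → M_q(ℂ) of a'(t) = A(t) a(t), a(0) = I, admits a matrix Q ∈ M_q(ℂ) with exp(Q) = a(1) and ‖Q − ∫₀¹ A(t) dt‖ ≤ C · (sup_{t ∈ [0,1]} ‖A(t)‖)². -/

import Mathlib

open MeasureTheory Set

noncomputable section

attribute [local instance] Matrix.frobeniusNormedAddCommGroup Matrix.frobeniusNormedRing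
  Matrix.frobeniusNormedSpace

/-- The algebra of `q × q` complex matrices, equipped (locally) with the Frobenius norm,
which is submultiplicative. -/
abbrev Mat (q : ℕ) := Matrix (Fin q) (Fin q) ℂ

attribute [local instance] Matrix.frobeniusNormedAlgebra

open scoped Nat
lemma two_pow_le_fact (n : ℕ) : 2 ^ (n + 1) ≤ (n + 2)! := by
  induction n with
  | zero => norm_num [Nat.factorial]
  | succ k ih =>
      calc 2 ^ (k + 2) = 2 * 2 ^ (k + 1) := by ring
        _ ≤ 2 * (k + 2)! := by omega
        _ ≤ (k + 3) * (k + 2)! := Nat.mul_le_mul_right _ (by omega)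
        _ = (k + 3)! := (Nat.factorial_succ _).symm

variable {𝔸 : Type*} [NormedRing 𝔸] [NormedAlgebra ℂ 𝔸] [CompleteSpace 𝔸]

lemma exp_tail_bound (x : 𝔸) (hx : ‖x‖ ≤ 1) :
    ‖NormedSpace.exp x - 1 - x‖ ≤ ‖x‖ ^ 2 := by
  set f : ℕ → 𝔸 := fun n => (n !⁻¹ : ℂ) • x ^ n with hf
  have hsum : Summable f := NormedSpace.expSeries_summable' (𝕂 := ℂ) x
  have key : NormedSpace.exp x - 1 - x = ∑' n, f (n + 2) := by
    have h := Summable.sum_add_tsum_nat_add 2 hsum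
    have hexp : NormedSpace.exp x = ∑' n, f n := by
      simp only [NormedSpace.exp_eq_tsum ℂ, hf]
    rw [hexp, ← h]
    simp [hf, Finset.sum_range_succ, Nat.factorial]
    abel
  rw [key]
  have hbound : ∀ n : ℕ, ‖f (n + 2)‖ ≤ ‖x‖ ^ 2 * ((1/2 : ℝ) * (1/2) ^ n) := by
    intro n
    have h1 : ‖f (n + 2)‖ = (((n + 2)! : ℝ))⁻¹ * ‖x ^ (n + 2)‖ := by
      rw [hf]
      simp only [norm_smul]
      congr 1
      rw [norm_inv]
      congr 1
      rw [Complex.norm_natCast]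
    have h2 : ‖x ^ (n + 2)‖ ≤ ‖x‖ ^ (n + 2) := norm_pow_le' x (by omega)
    have h3 : ‖x‖ ^ (n + 2) ≤ ‖x‖ ^ 2 := by
      calc ‖x‖ ^ (n + 2) = ‖x‖ ^ 2 * ‖x‖ ^ n := by ring
        _ ≤ ‖x‖ ^ 2 * 1 := by
            apply mul_le_mul_of_nonneg_left _ (by positivity)
            exact pow_le_one₀ (norm_nonneg x) hx
        _ = ‖x‖ ^ 2 := by ring
    have h4 : (((n + 2)! : ℝ))⁻¹ ≤ (1/2 : ℝ) * (1/2) ^ n := by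
      have h5 : (2 : ℝ) ^ (n + 1) ≤ ((n + 2)! : ℝ) := by exact_mod_cast two_pow_le_fact n
      rw [show (1/2 : ℝ) * (1/2)^n = ((2:ℝ)^(n+1))⁻¹ by
        rw [one_div, ← inv_pow]; ring]
      exact inv_anti₀ (by positivity) h5
    calc ‖f (n + 2)‖ = (((n + 2)! : ℝ))⁻¹ * ‖x ^ (n + 2)‖ := h1
      _ ≤ ((1/2 : ℝ) * (1/2) ^ n) * ‖x‖ ^ 2 := by
          apply mul_le_mul h4 (h2.trans h3) (norm_nonneg _)
          positivity
      _ = ‖x‖ ^ 2 * ((1/2 : ℝ) * (1/2) ^ n) := by ring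
  have hg : HasSum (fun n : ℕ => ‖x‖ ^ 2 * ((1/2 : ℝ) * (1/2) ^ n)) (‖x‖ ^ 2) := by
    have h := (hasSum_geometric_of_lt_one (by norm_num : (0:ℝ) ≤ 1/2) (by norm_num)).mul_left
      (‖x‖ ^ 2 * (1/2))
    have h' : ‖x‖ ^ 2 * (1/2) * (1 - 1/2 : ℝ)⁻¹ = ‖x‖ ^ 2 := by
      rw [show (1 - 1/2 : ℝ)⁻¹ = 2 by norm_num]; ring
    rw [h'] at h
    convert h using 2 with n
    · rfl
    ring
  exact tsum_of_norm_bounded hg hbound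

lemma exp_local_inv : ∃ δ > 0, ∀ y : 𝔸, ‖y - 1‖ < δ →
    ∃ Q : 𝔸, NormedSpace.exp Q = y ∧ ‖Q‖ ≤ 1/2 := by
  have hder : HasStrictFDerivAt (NormedSpace.exp)
      ((ContinuousLinearEquiv.refl ℂ 𝔸) : 𝔸 →L[ℂ] 𝔸) 0 :=
    hasStrictFDerivAt_exp_zero (𝕂 := ℂ)
  set g := hder.localInverse _ _ _ with hg
  have h1 : ∀ᶠ y in nhds (NormedSpace.exp (0 : 𝔸)), NormedSpace.exp (g y) = y :=
    hder.eventually_right_inverse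
  have h3 : g (NormedSpace.exp (0 : 𝔸)) = 0 := hder.localInverse_apply_image
  have h2 : ContinuousAt g (NormedSpace.exp (0 : 𝔸)) := hder.localInverse_continuousAt
  have h4 : ∀ᶠ y in nhds (NormedSpace.exp (0 : 𝔸)), ‖g y‖ < 1/2 := by
    have ht := h2.tendsto
    rw [h3] at ht
    have hb := ht (Metric.ball_mem_nhds (0 : 𝔸) (by norm_num : (0:ℝ) < 1/2))
    filter_upwards [hb] with y hy
    simpa [Metric.mem_ball, dist_eq_norm] using hy
  have h5 := h1.and h4
  rw [NormedSpace.exp_zero] at h5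
  rw [Metric.eventually_nhds_iff] at h5
  obtain ⟨δ, hδ, hP⟩ := h5
  refine ⟨δ, hδ, fun y hy => ?_⟩
  have := hP (show dist y 1 < δ by rwa [dist_eq_norm])
  exact ⟨g y, this.1, this.2.le⟩


/-- There are constants `ε₀ ∈ (0,1)` and `C ≥ 0` (depending only on `q`
and the norm) such that for every continuous `A : [0,1] → M_q(ℂ)` with
`sup_{[0,1]} ‖A‖ < ε₀`, the solution of `a' = A a`, `a(0) = I`, admits a logarithm
`Q` (`exp Q = a(1)`) with `‖Q - ∫₀¹ A‖ ≤ C (sup ‖A‖)²`. -/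
theorem stmt12 (q : ℕ) (hq : 1 ≤ q) :
    ∃ ε₀ : ℝ, 0 < ε₀ ∧ ε₀ < 1 ∧ ∃ C ≥ (0:ℝ),
      ∀ A : ℝ → Mat q, ContinuousOn A (Icc 0 1) →
        sSup ((fun t => ‖A t‖) '' Icc 0 1) < ε₀ →
        ∀ a : ℝ → Mat q, a 0 = 1 →
          (∀ t ∈ Icc (0:ℝ) 1, HasDerivWithinAt a (A t * a t) (Icc 0 1) t) →
          ∃ Q : Mat q, NormedSpace.exp Q = a 1 ∧
            ‖Q - ∫ t in (0:ℝ)..1, A t‖ ≤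
              C * (sSup ((fun t => ‖A t‖) '' Icc 0 1)) ^ 2 := by
  obtain ⟨δ, hδ, hinv⟩ := exp_local_inv (𝔸 := Mat q)
  set B : ℝ := ‖(1 : Mat q)‖ + 1 with hB
  have hB1 : (1:ℝ) ≤ B := by
    have := norm_nonneg (1 : Mat q); simp only [hB]; linarith
  have hBpos : (0:ℝ) < B := by linarith
  refine ⟨min (1/2) (δ / (2 * B)), by positivity, lt_of_le_of_lt (min_le_left _ _) (by norm_num),
    16 * B ^ 2 + 2 * B, by positivity, ?_⟩
  intro A hA hsup a ha0 hderiv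
  set ε : ℝ := sSup ((fun t => ‖A t‖) '' Icc 0 1) with hε
  -- basic facts about ε
  have hbdd : BddAbove ((fun t => ‖A t‖) '' Icc 0 1) :=
    (isCompact_Icc.image_of_continuousOn hA.norm).bddAbove
  have hle : ∀ t ∈ Icc (0:ℝ) 1, ‖A t‖ ≤ ε := fun t ht => le_csSup hbdd ⟨t, ht, rfl⟩
  have hε0 : 0 ≤ ε := le_trans (norm_nonneg (A 0)) (hle 0 ⟨le_refl 0, by norm_num⟩)
  have hεhalf : ε < 1/2 := lt_of_lt_of_le hsup (min_le_left _ _)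
  have hεδ : ε < δ / (2 * B) := lt_of_lt_of_le hsup (min_le_right _ _)
  -- continuity of a
  have hconta : ContinuousOn a (Icc 0 1) := fun t ht => (hderiv t ht).continuousWithinAt
  -- Gronwall bound : ‖a t - 1‖ ≤ 2 * B * ε on Icc 0 1
  have h1 : ∀ t ∈ Icc (0:ℝ) 1, ‖a t - 1‖ ≤ 2 * B * ε := by
    have hfc : ContinuousOn (fun t => a t - 1) (Icc 0 1) := hconta.sub continuousOn_const
    have hfd : ∀ x ∈ Ico (0:ℝ) 1,
        HasDerivWithinAt (fun t => a t - 1) (A x * a x) (Ici x) x := by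
      intro x hx
      have hmem : Icc (0:ℝ) 1 ∈ nhdsWithin x (Ici x) :=
        mem_nhdsWithin.2 ⟨Iio 1, isOpen_Iio, hx.2,
          fun y hy => ⟨le_trans hx.1 hy.2, le_of_lt hy.1⟩⟩
      exact ((hderiv x ⟨hx.1, hx.2.le⟩).mono_of_mem_nhdsWithin hmem).sub_const 1
    have hstart : ‖a 0 - 1‖ ≤ 0 := by simp [ha0]
    have hbound : ∀ x ∈ Ico (0:ℝ) 1,
        ‖A x * a x‖ ≤ 1 * ‖a x - 1‖ + ε * B := by
      intro x hx
      have hAx : ‖A x‖ ≤ ε := hle x ⟨hx.1, hx.2.le⟩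
      have hax : ‖a x‖ ≤ ‖a x - 1‖ + ‖(1 : Mat q)‖ := by
        calc ‖a x‖ = ‖(a x - 1) + 1‖ := by rw [sub_add_cancel]
          _ ≤ ‖a x - 1‖ + ‖(1 : Mat q)‖ := norm_add_le _ _
      calc ‖A x * a x‖ ≤ ‖A x‖ * ‖a x‖ := norm_mul_le _ _
        _ ≤ ε * (‖a x - 1‖ + ‖(1 : Mat q)‖) := by
            apply mul_le_mul hAx (by linarith) (norm_nonneg _) hε0
        _ ≤ 1 * ‖a x - 1‖ + ε * B := by
            have h := norm_nonneg (a x - 1)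
            have hn1 : ‖(1 : Mat q)‖ ≤ B := by simp [hB]
            nlinarith
    have hg := norm_le_gronwallBound_of_norm_deriv_right_le hfc hfd hstart hbound
    intro t ht
    have := hg t ht
    rw [gronwallBound_of_K_ne_0 one_ne_zero] at this
    have hexp : Real.exp (1 * (t - 0)) ≤ Real.exp 1 := by
      apply Real.exp_le_exp.2; simp; exact ht.2
    have hexp1 : Real.exp 1 ≤ 3 := by
      have := Real.exp_one_lt_d9; linarith
    have h0 : (0:ℝ) ≤ ε * B := by positivity
    calc ‖a t - 1‖ ≤ 0 * Real.exp (1 * (t - 0)) + ε * B / 1 * (Real.exp (1 * (t - 0)) - 1) :=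
          this
      _ = ε * B * (Real.exp (1 * (t - 0)) - 1) := by ring
      _ ≤ ε * B * 2 := by nlinarith
      _ = 2 * B * ε := by ring
  -- integrability
  have hIcc : uIcc (0:ℝ) 1 = Icc 0 1 := uIcc_of_le (by norm_num)
  letI : ENormedAddMonoid (Mat q) := NormedAddGroup.toENormedAddMonoid
  have hintAa : IntervalIntegrable (fun t => A t * a t) volume 0 1 := by
    apply ContinuousOn.intervalIntegrable
    rw [hIcc]; exact hA.mul hconta
  have hintA : IntervalIntegrable A volume 0 1 := by
    apply ContinuousOn.intervalIntegrable
    rw [hIcc]; exact hA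
  -- FTC
  have hFTC : ∫ t in (0:ℝ)..1, A t * a t = a 1 - a 0 := by
    apply intervalIntegral.integral_eq_sub_of_hasDeriv_right_of_le (by norm_num) hconta _ hintAa
    intro x hx
    have hmem : Icc (0:ℝ) 1 ∈ nhdsWithin x (Ioi x) :=
      mem_nhdsWithin.2 ⟨Iio 1, isOpen_Iio, hx.2,
        fun y hy => ⟨le_trans hx.1.le (le_of_lt hy.2), le_of_lt hy.1⟩⟩
    exact (hderiv x ⟨hx.1.le, hx.2.le⟩).mono_of_mem_nhdsWithin hmem
  -- the key integral estimate
  have h2 : ‖a 1 - 1 - ∫ t in (0:ℝ)..1, A t‖ ≤ 2 * B * ε ^ 2 := by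
    have heq : a 1 - 1 - ∫ t in (0:ℝ)..1, A t
        = ∫ t in (0:ℝ)..1, (A t * a t - A t) := by
      rw [intervalIntegral.integral_sub hintAa hintA, hFTC, ha0]
    rw [heq]
    have hb : ∀ x ∈ Set.uIoc (0:ℝ) 1, ‖A x * a x - A x‖ ≤ ε * (2 * B * ε) := by
      intro x hx
      rw [uIoc_of_le (by norm_num : (0:ℝ) ≤ 1)] at hx
      have hx' : x ∈ Icc (0:ℝ) 1 := ⟨hx.1.le, hx.2⟩
      have : A x * a x - A x = A x * (a x - 1) := by
        rw [mul_sub, mul_one]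
      rw [this]
      calc ‖A x * (a x - 1)‖ ≤ ‖A x‖ * ‖a x - 1‖ := norm_mul_le _ _
        _ ≤ ε * (2 * B * ε) := mul_le_mul (hle x hx') (h1 x hx') (norm_nonneg _) hε0
    have := intervalIntegral.norm_integral_le_of_norm_le_const hb
    simp only [sub_zero, abs_one, mul_one] at this
    calc ‖∫ t in (0:ℝ)..1, (A t * a t - A t)‖ ≤ ε * (2 * B * ε) := this
      _ = 2 * B * ε ^ 2 := by ring
  -- existence of the logarithm
  have ha1 : ‖a 1 - 1‖ ≤ 2 * B * ε := h1 1 ⟨by norm_num, le_refl 1⟩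
  have ha1δ : ‖a 1 - 1‖ < δ := by
    calc ‖a 1 - 1‖ ≤ 2 * B * ε := ha1
      _ < 2 * B * (δ / (2 * B)) := by
          apply mul_lt_mul_of_pos_left hεδ (by positivity)
      _ = δ := by field_simp
  obtain ⟨Q, hQexp, hQhalf⟩ := hinv (a 1) ha1δ
  have htail : ‖a 1 - 1 - Q‖ ≤ ‖Q‖ ^ 2 := by
    have := exp_tail_bound Q (by linarith)
    rwa [hQexp] at this
  have hQnorm : ‖Q‖ ≤ 4 * B * ε := by
    have hQle : ‖Q‖ ≤ ‖a 1 - 1‖ + ‖a 1 - 1 - Q‖ := by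
      calc ‖Q‖ = ‖(a 1 - 1) - (a 1 - 1 - Q)‖ := by rw [sub_sub_cancel]
        _ ≤ ‖a 1 - 1‖ + ‖a 1 - 1 - Q‖ := norm_sub_le _ _
    have hQ2 : ‖Q‖ ^ 2 ≤ (1/2) * ‖Q‖ := by
      have := norm_nonneg Q
      nlinarith
    have : ‖Q‖ ≤ 2 * ‖a 1 - 1‖ := by nlinarith
    linarith [mul_le_mul_of_nonneg_left ha1 (by norm_num : (0:ℝ) ≤ 2),
      this]
  refine ⟨Q, hQexp, ?_⟩
  calc ‖Q - ∫ t in (0:ℝ)..1, A t‖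
      ≤ ‖Q - (a 1 - 1)‖ + ‖(a 1 - 1) - ∫ t in (0:ℝ)..1, A t‖ :=
        norm_sub_le_norm_sub_add_norm_sub _ _ _
    _ = ‖a 1 - 1 - Q‖ + ‖a 1 - 1 - ∫ t in (0:ℝ)..1, A t‖ := by rw [norm_sub_rev]
    _ ≤ ‖Q‖ ^ 2 + 2 * B * ε ^ 2 := add_le_add htail h2
    _ ≤ (4 * B * ε) ^ 2 + 2 * B * ε ^ 2 := by
        apply add_le_add_left
        apply pow_le_pow_left₀ (norm_nonneg _) hQnorm
    _ = (16 * B ^ 2 + 2 * B) * ε ^ 2 := by ring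


end
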